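/- Let R be a commutative noetherian ring, let C be an ideal of R that is a semidualizing R-module, let h ∈ R with h = r₀² for some r₀ ∈ R, and let S(h) be the pseudocanonical cover of R via h. Then the triple (R, S(h), C) satisfies Property (**): the maps f : R → S(h), f(r) = (r,0), and g : S(h) → R, g(r,c) = r + c·r₀, are ring homomorphisms with g ∘ f = id_R, Hom_R(S(h), C) ≅ S(h) as S(h)-modules, Ext_R^i(S(h), C) = 0 for all i ≥ 1, and ker g ≅ C as R-modules. -/

import Mathlib

universe u

open TensorProduct CategoryTheory

noncomputable section




/-- The pseudocanonical cover `S(h)` of `R` via `h`: the abelian group `R ⊕ C` with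
multiplication `(r, c) * (r', c') = (r * r' + c * c' * h, r * c' + r' * c)`. -/
def PseudoCanCover (R : Type u) [CommRing R] (C : Ideal R) (h : R) : Type u := R × C

namespace PseudoCanCover

variable {R : Type u} [CommRing R] {C : Ideal R} {h : R}

/-- Build an element of `S(h)` from its components. -/
def mk (r : R) (c : C) : PseudoCanCover R C h := (r, c)

/-- First component. -/
def fst (p : PseudoCanCover R C h) : R := p.1

/-- Second component. -/
def snd (p : PseudoCanCover R C h) : C := p.2

theorem ext' {p q : PseudoCanCover R C h} (h1 : p.fst = q.fst)
    (h2 : (p.snd : R) = (q.snd : R)) : p = q :=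
  Prod.ext h1 (Subtype.ext h2)

instance : AddCommGroup (PseudoCanCover R C h) := inferInstanceAs (AddCommGroup (R × C))

instance : Mul (PseudoCanCover R C h) :=
  ⟨fun p q => mk (p.fst * q.fst + (p.snd : R) * (q.snd : R) * h)
    ⟨p.fst * (q.snd : R) + q.fst * (p.snd : R),
      add_mem (C.mul_mem_left _ q.snd.2) (C.mul_mem_left _ p.snd.2)⟩⟩

instance : One (PseudoCanCover R C h) := ⟨mk 1 0⟩

@[simp] theorem mk_fst (r : R) (c : C) : (mk r c : PseudoCanCover R C h).fst = r := rfl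

@[simp] theorem mk_snd (r : R) (c : C) :
    ((mk r c : PseudoCanCover R C h).snd : R) = (c : R) := rfl

@[simp] theorem mul_fst (p q : PseudoCanCover R C h) :
    (p * q).fst = p.fst * q.fst + (p.snd : R) * (q.snd : R) * h := rfl

@[simp] theorem mul_snd (p q : PseudoCanCover R C h) :
    ((p * q).snd : R) = p.fst * (q.snd : R) + q.fst * (p.snd : R) := rfl

@[simp] theorem add_fst (p q : PseudoCanCover R C h) : (p + q).fst = p.fst + q.fst := rfl

@[simp] theorem add_snd (p q : PseudoCanCover R C h) :
    ((p + q).snd : R) = (p.snd : R) + (q.snd : R) := rfl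

@[simp] theorem one_fst : (1 : PseudoCanCover R C h).fst = 1 := rfl

@[simp] theorem one_snd : ((1 : PseudoCanCover R C h).snd : R) = 0 := rfl

@[simp] theorem zero_fst : (0 : PseudoCanCover R C h).fst = 0 := rfl

@[simp] theorem zero_snd : ((0 : PseudoCanCover R C h).snd : R) = 0 := rfl

instance instCommRing : CommRing (PseudoCanCover R C h) :=
  { (inferInstanceAs (AddCommGroup (PseudoCanCover R C h)) : AddCommGroup (PseudoCanCover R C h)),
    (inferInstanceAs (Mul (PseudoCanCover R C h)) : Mul (PseudoCanCover R C h)),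
    (inferInstanceAs (One (PseudoCanCover R C h)) : One (PseudoCanCover R C h)) with
    mul_assoc := fun a b c => ext' (by simp; ring) (by simp; ring)
    one_mul := fun a => ext' (by simp) (by simp)
    mul_one := fun a => ext' (by simp) (by simp)
    left_distrib := fun a b c => ext' (by simp; ring) (by simp; ring)
    right_distrib := fun a b c => ext' (by simp; ring) (by simp; ring)
    zero_mul := fun a => ext' (by simp) (by simp)
    mul_zero := fun a => ext' (by simp) (by simp)
    mul_comm := fun a b => ext' (by simp; ring) (by simp; ring) }

/-- The canonical inclusion `R → S(h)`. -/
def incl : R →+* PseudoCanCover R C h where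
  toFun r := mk r 0
  map_one' := rfl
  map_mul' r s := (ext' (by simp) (by simp)).symm
  map_zero' := rfl
  map_add' r s := (ext' (by simp) (by simp)).symm

/-- The projection `S(h) → R`, `(r, c) ↦ r + c * r₀`, where `h = r₀ ^ 2`. -/
def proj (r₀ : R) (hh : h = r₀ ^ 2) : PseudoCanCover R C h →+* R where
  toFun p := p.fst + (p.snd : R) * r₀
  map_one' := by simp
  map_mul' p q := by simp [hh]; ring
  map_zero' := by simp
  map_add' p q := by simp; ring

end PseudoCanCover





/-- The `S`-module structure on `Hom_R(S, M)` coming from the `S`-action on the first slot: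
`(s • φ) t = φ (s * t)`. -/
def homModS {R S : Type u} [CommRing R] [CommRing S] [Algebra R S]
    (M : Type u) [AddCommGroup M] [Module R M] :
    Module S (S →ₗ[R] M) where
  smul s φ := φ.comp (LinearMap.mulLeft R s)
  one_smul φ := by
    ext t
    show φ (1 * t) = φ t
    rw [one_mul]
  mul_smul s s' φ := by
    ext t
    show φ ((s * s') * t) = φ (s' * (s * t))
    rw [mul_assoc, mul_left_comm]
  smul_zero s := by ext t; rfl
  smul_add s φ ψ := by ext t; rfl
  add_smul s s' φ := by
    ext t
    show φ ((s + s') * t) = φ (s * t) + φ (s' * t)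
    rw [add_mul, map_add]
  zero_smul φ := by
    ext t
    show φ (0 * t) = 0
    rw [zero_mul, map_zero]

/-- The `ModuleCat`-valued `Ext` of two modules. -/
abbrev extMod (R : Type u) [CommRing R] (M N : Type u)
    [AddCommGroup M] [Module R M] [AddCommGroup N] [Module R N] (i : ℕ) : ModuleCat.{u} R :=
  ((Ext R (ModuleCat.{u} R) i).obj (Opposite.op (ModuleCat.of R M))).obj (ModuleCat.of R N)

/-- `C` is a semidualizing `R`-module. -/
def IsSemidualizing (R : Type u) [CommRing R]
    (C : Type u) [AddCommGroup C] [Module R C] : Prop :=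
  Module.Finite R C ∧
  Function.Bijective (fun r : R => (r • LinearMap.id : C →ₗ[R] C)) ∧
  ∀ i : ℕ, 1 ≤ i → Subsingleton (extMod R C C i)

/-- Property (*) for the triple `(R, S, C)`, relative to the retraction `g` of the
algebra map `R → S`. -/
def PropertyStar (R S : Type u) [CommRing R] [CommRing S] [Algebra R S] (g : S →+* R)
    (C : Type u) [AddCommGroup C] [Module R C] : Prop :=
  g.comp (algebraMap R S) = RingHom.id R ∧
  (letI : Module S (S →ₗ[R] C) := homModS C
   Nonempty ((S →ₗ[R] C) ≃ₗ[S] S)) ∧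
  ∀ i : ℕ, 1 ≤ i → Subsingleton (extMod R S C i)

/-- Property (**): Property (*) together with `C ≅ ker g` as `R`-modules. -/
def PropertyStarStar (R S : Type u) [CommRing R] [CommRing S] [Algebra R S] (g : S →+* R)
    (C : Type u) [AddCommGroup C] [Module R C] : Prop :=
  PropertyStar R S g C ∧
  (letI : Module R ↥(RingHom.ker g) := Module.compHom _ (algebraMap R S)
   Nonempty (↥(RingHom.ker g) ≃ₗ[R] C))


-- ### Auxiliary lemmas

open Limits in
instance leftDerivedAdditiveAux {C : Type*} [Category C] {D : Type*} [Category D]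
    [Abelian C] [HasProjectiveResolutions C] [EnoughProjectives C] [Abelian D]
    (F : C ⥤ D) [F.Additive] (n : ℕ) : (F.leftDerived n).Additive where
  map_add {X Y f g} := by
    let P : ProjectiveResolution X := ProjectiveResolution.of X
    let Q : ProjectiveResolution Y := ProjectiveResolution.of Y
    have w : (ProjectiveResolution.lift f P Q + ProjectiveResolution.lift g P Q) ≫ Q.π =
        P.π ≫ (ChainComplex.single₀ C).map (f + g) := by
      rw [Preadditive.add_comp, ProjectiveResolution.lift_commutes,
        ProjectiveResolution.lift_commutes, Functor.map_add, Preadditive.comp_add]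
    rw [F.leftDerived_map_eq n (f + g) _ w,
      F.leftDerived_map_eq n f (ProjectiveResolution.lift f P Q)
        (ProjectiveResolution.lift_commutes f P Q),
      F.leftDerived_map_eq n g (ProjectiveResolution.lift g P Q)
        (ProjectiveResolution.lift_commutes g P Q),
      Functor.map_add, Preadditive.add_comp, Preadditive.comp_add]

open Limits in
lemma subsingleton_extMod_of_split (R : Type u) [CommRing R] (M N Y : Type u)
    [AddCommGroup M] [Module R M] [AddCommGroup N] [Module R N] [AddCommGroup Y] [Module R Y]
    (pR : M →ₗ[R] R) (iR : R →ₗ[R] M) (pN : M →ₗ[R] N) (iN : N →ₗ[R] M)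
    (hsum : iR.comp pR + iN.comp pN = LinearMap.id) (n : ℕ)
    (hN : Subsingleton (extMod R N Y (n + 1))) :
    Subsingleton (extMod R M Y (n + 1)) := by
  let D := ModuleCat.{u} R
  let G : Dᵒᵖ ⥤ ModuleCat.{u} R :=
    (((linearYoneda R D).obj (ModuleCat.of R Y)).rightOp.leftDerived (n + 1)).leftOp
  have hGR : IsZero (G.obj (Opposite.op (ModuleCat.of R R))) := by
    haveI : Projective (ModuleCat.of R R) :=
      ModuleCat.projective_of_free (Module.Basis.singleton PUnit.{u+1} R)
    exact isZero_Ext_succ_of_projective (ModuleCat.of R R) (ModuleCat.of R Y) n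
  have hGN : IsZero (G.obj (Opposite.op (ModuleCat.of R N))) :=
    @ModuleCat.isZero_of_subsingleton _ _ _ hN
  let uR : ModuleCat.of R M ⟶ ModuleCat.of R R := ModuleCat.ofHom pR
  let jR : ModuleCat.of R R ⟶ ModuleCat.of R M := ModuleCat.ofHom iR
  let uN : ModuleCat.of R M ⟶ ModuleCat.of R N := ModuleCat.ofHom pN
  let jN : ModuleCat.of R N ⟶ ModuleCat.of R M := ModuleCat.ofHom iN
  have hid : 𝟙 (G.obj (Opposite.op (ModuleCat.of R M))) = 0 := by
    have h1 : (𝟙 (ModuleCat.of R M) : ModuleCat.of R M ⟶ ModuleCat.of R M) =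
        (uR ≫ jR) + (uN ≫ jN) := ModuleCat.hom_ext (by
          rw [ModuleCat.hom_id, ModuleCat.hom_add, ModuleCat.hom_comp, ModuleCat.hom_comp]
          exact hsum.symm)
    calc 𝟙 (G.obj (Opposite.op (ModuleCat.of R M)))
        = G.map (𝟙 (Opposite.op (ModuleCat.of R M))) := (G.map_id _).symm
      _ = G.map ((jR.op ≫ uR.op) + (jN.op ≫ uN.op)) := by
          congr 1
          rw [← op_comp, ← op_comp, ← op_add, ← h1, op_id]
      _ = G.map (jR.op ≫ uR.op) + G.map (jN.op ≫ uN.op) := G.map_add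
      _ = 0 := by
          rw [G.map_comp, G.map_comp, hGR.eq_of_src (G.map uR.op) 0,
            hGN.eq_of_src (G.map uN.op) 0, comp_zero, comp_zero, add_zero]
  have : Subsingleton (G.obj (Opposite.op (ModuleCat.of R M))) := by
    constructor
    intro a b
    have ha := LinearMap.congr_fun (congrArg ModuleCat.Hom.hom hid) a
    have hb := LinearMap.congr_fun (congrArg ModuleCat.Hom.hom hid) b
    rw [ModuleCat.hom_id, ModuleCat.hom_zero, LinearMap.id_apply] at ha hb
    rw [ha, hb, LinearMap.zero_apply, LinearMap.zero_apply]
  exact this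

/-- If an ideal `C` of `R` is semidualizing as an `R`-module, `h = r₀ ^ 2` is a square in
`R`, and `S(h)` is the pseudocanonical cover of `R` via `h`, then the triple
`(R, S(h), C)` satisfies Property (**), with `f : r ↦ (r, 0)` and
`g : (r, c) ↦ r + c * r₀`. -/
theorem pseudoCanCover_propertyStarStar (R : Type u) [CommRing R] [IsNoetherianRing R]
    (C : Ideal R) (hC : IsSemidualizing R ↥C) (h r₀ : R) (hsq : h = r₀ ^ 2) :
    letI : Algebra R (PseudoCanCover R C h) :=
      (PseudoCanCover.incl : R →+* PseudoCanCover R C h).toAlgebra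
    PropertyStarStar R (PseudoCanCover R C h) (PseudoCanCover.proj r₀ hsq) ↥C := by
  letI : Algebra R (PseudoCanCover R C h) :=
    (PseudoCanCover.incl : R →+* PseudoCanCover R C h).toAlgebra
  show PropertyStarStar R (PseudoCanCover R C h) (PseudoCanCover.proj r₀ hsq) ↥C
  have hsmul : ∀ (r : R) (s : PseudoCanCover R C h),
      r • s = PseudoCanCover.incl r * s := fun _ _ => rfl
  have hincl : ∀ r : R, (PseudoCanCover.incl r : PseudoCanCover R C h) =
      PseudoCanCover.mk r 0 := fun _ => rfl
  have smul_fst : ∀ (r : R) (s : PseudoCanCover R C h), (r • s).fst = r * s.fst := by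
    intro r s; rw [hsmul, hincl]; simp
  have smul_snd : ∀ (r : R) (s : PseudoCanCover R C h),
      ((r • s).snd : R) = r * (s.snd : R) := by
    intro r s; rw [hsmul, hincl]; simp
  have hproj : ∀ p : PseudoCanCover R C h,
      PseudoCanCover.proj r₀ hsq p = p.fst + (p.snd : R) * r₀ := fun _ => rfl
  -- the second-slot projection, R-linearly
  let φ₀ : PseudoCanCover R C h →ₗ[R] ↥C :=
    { toFun := PseudoCanCover.snd
      map_add' := fun s t => rfl
      map_smul' := fun r s => Subtype.ext (by
        show ((r • s).snd : R) = r * (s.snd : R)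
        exact smul_snd r s) }
  -- the first-slot injection, R-linearly
  let ι₀ : ↥C →ₗ[R] PseudoCanCover R C h :=
    { toFun := fun c => PseudoCanCover.mk 0 c
      map_add' := fun c c' => PseudoCanCover.ext' (by simp) (by simp)
      map_smul' := fun r c => (PseudoCanCover.ext'
        (by rw [smul_fst]; simp)
        (by rw [smul_snd]; simp)).symm }
  refine ⟨⟨?_, ?_, ?_⟩, ?_⟩
  · -- g ∘ f = id
    ext r
    show PseudoCanCover.proj r₀ hsq (PseudoCanCover.incl r) = r
    rw [hproj, hincl]
    simp
  · -- Hom_R(S, C) ≅ S as S-modules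
    letI : Module (PseudoCanCover R C h) (PseudoCanCover R C h →ₗ[R] ↥C) := homModS ↥C
    let Ψ : PseudoCanCover R C h →ₗ[PseudoCanCover R C h]
        (PseudoCanCover R C h →ₗ[R] ↥C) :=
      { toFun := fun s => s • φ₀
        map_add' := fun s t => add_smul s t φ₀
        map_smul' := fun s t => by
          show (s • t) • φ₀ = s • (t • φ₀)
          rw [smul_eq_mul, mul_smul] }
    have hΨ : ∀ s t, ((Ψ s t : ↥C) : R) = ((s * t).snd : R) := fun _ _ => rfl
    have hinj : Function.Injective Ψ := by
      intro s s' hss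
      have key : ∀ t, (((s * t).snd : ↥C) : R) = (((s' * t).snd : ↥C) : R) := by
        intro t
        rw [← hΨ, ← hΨ, hss]
      have h2 : ((s.snd : ↥C) : R) = ((s'.snd : ↥C) : R) := by
        have := key (PseudoCanCover.mk 1 0)
        simpa using this
      have h1 : s.fst = s'.fst := by
        apply hC.2.1.injective
        apply LinearMap.ext
        intro c
        apply Subtype.ext
        show s.fst * (c : R) = s'.fst * (c : R)
        have := key (PseudoCanCover.mk 0 c)
        simpa using this
      exact PseudoCanCover.ext' h1 h2
    have hsurj : Function.Surjective Ψ := by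
      intro φ
      let χ : ↥C →ₗ[R] ↥C := φ.comp ι₀
      obtain ⟨a, ha⟩ := hC.2.1.surjective χ
      refine ⟨PseudoCanCover.mk a (φ 1), ?_⟩
      apply LinearMap.ext
      intro t
      have hdec : t = t.fst • (1 : PseudoCanCover R C h) + PseudoCanCover.mk 0 t.snd := by
        refine PseudoCanCover.ext' ?_ ?_
        · rw [PseudoCanCover.add_fst, smul_fst]; simp
        · rw [PseudoCanCover.add_snd, smul_snd]; simp
      apply Subtype.ext
      show (((PseudoCanCover.mk a (φ 1) * t).snd : ↥C) : R) = ((φ t : ↥C) : R)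
      conv_rhs => rw [hdec]
      rw [map_add, map_smul]
      have hχ : φ (PseudoCanCover.mk 0 t.snd) = a • t.snd := by
        have : χ t.snd = a • t.snd := by rw [← ha]; rfl
        exact this
      rw [hχ]
      push_cast [PseudoCanCover.mul_snd]
      show a * (t.snd : R) + t.fst * ((φ 1 : ↥C) : R) =
        t.fst * ((φ 1 : ↥C) : R) + a * (t.snd : R)
      ring
    exact ⟨(LinearEquiv.ofBijective Ψ ⟨hinj, hsurj⟩).symm⟩
  · -- Ext vanishing
    intro i hi
    obtain ⟨n, rfl⟩ : ∃ n, i = n + 1 := ⟨i - 1, by omega⟩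
    refine subsingleton_extMod_of_split R (PseudoCanCover R C h) ↥C ↥C
      ({ toFun := PseudoCanCover.fst
         map_add' := fun _ _ => rfl
         map_smul' := fun r s => smul_fst r s })
      ({ toFun := fun r => PseudoCanCover.mk r 0
         map_add' := fun r r' => PseudoCanCover.ext' (by simp) (by simp)
         map_smul' := fun r r' => (PseudoCanCover.ext'
           (by rw [smul_fst]; simp) (by rw [smul_snd]; simp)).symm })
      φ₀ ι₀ ?_ n (hC.2.2 (n + 1) (by omega))
    apply LinearMap.ext
    intro s
    show PseudoCanCover.mk s.fst 0 + PseudoCanCover.mk 0 s.snd = s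
    exact PseudoCanCover.ext' (by simp) (by simp)
  · -- ker g ≅ C
    letI : Module R ↥(RingHom.ker (PseudoCanCover.proj r₀ hsq : PseudoCanCover R C h →+* R)) :=
      Module.compHom _ (algebraMap R (PseudoCanCover R C h))
    have hker_smul : ∀ (r : R) (x : ↥(RingHom.ker (PseudoCanCover.proj r₀ hsq : PseudoCanCover R C h →+* R))),
        (r • x).1 = PseudoCanCover.incl r * x.1 := by intro r x; rfl
    refine ⟨{ toFun := fun x => x.1.snd
              map_add' := fun x y => rfl
              map_smul' := fun r x => Subtype.ext (by
                show (((r • x).1).snd : R) = r * ((x.1.snd : ↥C) : R)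
                rw [hker_smul, hincl]
                simp)
              invFun := fun c => ⟨PseudoCanCover.mk (-((c : R) * r₀)) c, by
                show PseudoCanCover.proj r₀ hsq (PseudoCanCover.mk (-((c : R) * r₀)) c) = 0
                rw [hproj]
                simp⟩
              left_inv := fun x => Subtype.ext (PseudoCanCover.ext'
                (by
                  have hx : x.1.fst + (x.1.snd : R) * r₀ = 0 := x.2
                  rw [PseudoCanCover.mk_fst]
                  linear_combination -hx)
                (by rw [PseudoCanCover.mk_snd]))
              right_inv := fun c => rfl }⟩


end
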